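/- Suppose Ψ satisfies Ψ(t) + Ψ(1−t) = 2Ψ(1/2) for all t ∈ [0,1] and Ψ(t) < Ψ(1/2) for all t ∈ [0,1/2). Let S₁ ⊆ [n] be a Smith set: for every i ∈ S₁ and j ∉ S₁, P(y_i ≻ y_j) > 1/2. Then for any Nash equilibrium (π₁*, π₂*) of the game with payoff Ψ(P(y_i ≻ y_j)), the support of π₁* is contained in S₁. -/
import Mathlib


open Finset

/-- A probability vector on `Fin n`. -/
def IsProb {n : ℕ} (π : Fin n → ℝ) : Prop := (∀ i, 0 ≤ π i) ∧ ∑ i, π i = 1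

/-- Expected payoff of the two-player game with payoff matrix `A`. -/
def payoff {n : ℕ} (A : Fin n → Fin n → ℝ) (π π' : Fin n → ℝ) : ℝ :=
  ∑ i, ∑ j, π i * π' j * A i j

/-- Nash equilibrium of the zero-sum game with payoff matrix `A`. -/
def IsNash {n : ℕ} (A : Fin n → Fin n → ℝ) (π₁ π₂ : Fin n → ℝ) : Prop :=
  IsProb π₁ ∧ IsProb π₂ ∧
  (∀ π, IsProb π → payoff A π π₂ ≤ payoff A π₁ π₂) ∧
  (∀ π', IsProb π' → payoff A π₁ π₂ ≤ payoff A π₁ π')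

/-- For an "anti-symmetric up to constant" matrix, the diagonal payoff is the constant. -/
lemma payoff_diag {n : ℕ} (A : Fin n → Fin n → ℝ) (c : ℝ)
    (hA : ∀ i j, A i j + A j i = 2 * c) (π : Fin n → ℝ) (hπ : IsProb π) :
    payoff A π π = c := by
  obtain ⟨h0, h1⟩ := hπ
  have e2 : (∑ i, ∑ j, π i * π j * A i j) = ∑ i, ∑ j, π j * π i * A j i :=
    Finset.sum_comm
  have e1 : ∑ i, ∑ j, π i * π j * (A i j + A j i) = 2 * c := by
    have hin : ∀ i ∈ Finset.univ, ∑ j, π i * π j * (A i j + A j i) = π i * (2 * c) := by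
      intro i _
      calc ∑ j, π i * π j * (A i j + A j i)
          = ∑ j, (π i * (2 * c)) * π j := by
            refine Finset.sum_congr rfl fun j _ => ?_
            rw [hA i j]; ring
        _ = π i * (2 * c) := by rw [← Finset.mul_sum, h1, mul_one]
    rw [Finset.sum_congr rfl hin, ← Finset.sum_mul, h1, one_mul]
  have e3 : (∑ i, ∑ j, π i * π j * (A i j + A j i)) =
      (∑ i, ∑ j, π i * π j * A i j) + (∑ i, ∑ j, π j * π i * A j i) := by
    rw [← Finset.sum_add_distrib]
    refine Finset.sum_congr rfl fun i _ => ?_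
    rw [← Finset.sum_add_distrib]
    refine Finset.sum_congr rfl fun j _ => by ring
  have : payoff A π π = ∑ i, ∑ j, π i * π j * A i j := rfl
  linarith

theorem stmt_6 {n : ℕ} (P : Fin n → Fin n → ℝ) (Ψ : ℝ → ℝ)
    (hP01 : ∀ i j, 0 ≤ P i j ∧ P i j ≤ 1)
    (hPanti : ∀ i j, P i j + P j i = 1)
    (hNoTie : ∀ i j, i ≠ j → P i j ≠ 1 / 2)
    (hΨsym : ∀ t : ℝ, 0 ≤ t → t ≤ 1 → Ψ t + Ψ (1 - t) = 2 * Ψ (1 / 2))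
    (hΨlt : ∀ t : ℝ, 0 ≤ t → t < 1 / 2 → Ψ t < Ψ (1 / 2))
    (S₁ : Finset (Fin n)) (hS₁ne : S₁.Nonempty)
    (hSmith : ∀ i ∈ S₁, ∀ j ∉ S₁, 1 / 2 < P i j)
    (π₁ π₂ : Fin n → ℝ)
    (hNash : IsNash (fun i j => Ψ (P i j)) π₁ π₂) :
    ∀ i, 0 < π₁ i → i ∈ S₁ := by
  obtain ⟨hp1, hp2, hmax, hmin⟩ := hNash
  set A : Fin n → Fin n → ℝ := fun i j => Ψ (P i j) with hAdef
  set c : ℝ := Ψ (1 / 2) with hcdef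
  have hAanti : ∀ i j, A i j + A j i = 2 * c := by
    intro i j
    have h1 := hPanti i j
    have h2 := hΨsym (P i j) (hP01 i j).1 (hP01 i j).2
    have h3 : P j i = 1 - P i j := by linarith
    simp only [hAdef, h3]
    linarith
  have hAlt : ∀ i, i ∉ S₁ → ∀ j ∈ S₁, A i j < c := by
    intro i hi j hj
    have h := hSmith j hj i hi
    have h1 := hPanti i j
    exact hΨlt (P i j) (hP01 i j).1 (by linarith)
  -- the value of the game is c
  have hval : payoff A π₁ π₂ = c := by
    have h1 : payoff A π₂ π₂ ≤ payoff A π₁ π₂ := hmax π₂ hp2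
    have h2 : payoff A π₁ π₂ ≤ payoff A π₁ π₁ := hmin π₁ hp1
    have d1 : payoff A π₁ π₁ = c := payoff_diag A c hAanti π₁ hp1
    have d2 : payoff A π₂ π₂ = c := payoff_diag A c hAanti π₂ hp2
    linarith
  have hge : ∀ π', IsProb π' → c ≤ payoff A π₁ π' := by
    intro π' hπ'
    have := hmin π' hπ'
    linarith
  intro i₀ hpos
  by_contra hnot
  set a : ℝ := ∑ j ∈ S₁, π₁ j with hadef
  have ha0 : 0 ≤ a := Finset.sum_nonneg fun j _ => hp1.1 j
  have hsumc : ∀ s : Finset (Fin n), ∑ i ∈ s, π₁ i * c = (∑ i ∈ s, π₁ i) * c := by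
    intro s; rw [Finset.sum_mul]
  rcases eq_or_lt_of_le ha0 with ha | ha
  · -- no mass on S₁ : compare with the pure strategy k ∈ S₁
    obtain ⟨k, hk⟩ := hS₁ne
    have hzero : ∀ j ∈ S₁, π₁ j = 0 := by
      intro j hj
      have := (Finset.sum_eq_zero_iff_of_nonneg (fun j _ => hp1.1 j)).1 ha.symm
      exact this j hj
    set π' : Fin n → ℝ := fun j => if j = k then 1 else 0 with hπ'def
    have hπ' : IsProb π' := by
      constructor
      · intro j; by_cases hj : j = k <;> simp [hπ'def, hj]
      · simp [hπ'def]
    have hcomp : payoff A π₁ π' = ∑ i, π₁ i * A i k := by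
      rw [payoff]
      refine Finset.sum_congr rfl fun i _ => ?_
      rw [Finset.sum_eq_single k (fun b _ hb => by simp [hπ'def, hb]) (by simp)]
      simp [hπ'def]
    have hlt : ∑ i, π₁ i * A i k < ∑ i, π₁ i * c := by
      refine Finset.sum_lt_sum (fun i _ => ?_) ⟨i₀, Finset.mem_univ i₀, ?_⟩
      · by_cases hi : i ∈ S₁
        · rw [hzero i hi]; simp
        · exact mul_le_mul_of_nonneg_left (hAlt i hi k hk).le (hp1.1 i)
      · exact mul_lt_mul_of_pos_left (hAlt i₀ hnot k hk) hpos
    have hs : ∑ i, π₁ i * c = c := by rw [hsumc, hp1.2, one_mul]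
    have := hge π' hπ'
    rw [hcomp] at this
    linarith
  · -- positive mass on S₁ : compare with π₁ conditioned on S₁
    obtain ⟨j₁, hj₁S, hj₁pos⟩ : ∃ j ∈ S₁, 0 < π₁ j := by
      by_contra h
      push_neg at h
      have : a ≤ 0 := Finset.sum_nonpos fun j hj => h j hj
      linarith
    set π' : Fin n → ℝ := fun j => if j ∈ S₁ then π₁ j / a else 0 with hπ'def
    have hπ' : IsProb π' := by
      constructor
      · intro j
        simp only [hπ'def]
        split
        · exact div_nonneg (hp1.1 j) ha0
        · exact le_refl 0
      · have : ∑ j, π' j = ∑ j ∈ S₁, π₁ j / a := by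
          rw [show (∑ j, π' j) = ∑ j, if j ∈ S₁ then π₁ j / a else 0 from rfl,
            Finset.sum_ite_mem, Finset.univ_inter]
        rw [this, ← Finset.sum_div, ← hadef, div_self (ne_of_gt ha)]
    have hcomp : payoff A π₁ π' = ∑ i, ∑ j ∈ S₁, π₁ i * (π₁ j / a) * A i j := by
      rw [payoff]
      refine Finset.sum_congr rfl fun i _ => ?_
      calc ∑ j, π₁ i * π' j * A i j
          = ∑ j, (if j ∈ S₁ then π₁ i * (π₁ j / a) * A i j else 0) := by
            refine Finset.sum_congr rfl fun j _ => ?_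
            by_cases hj : j ∈ S₁ <;> simp [hπ'def, hj]
        _ = ∑ j ∈ S₁, π₁ i * (π₁ j / a) * A i j := by
            rw [Finset.sum_ite_mem, Finset.univ_inter]
    -- diagonal block
    set T : ℝ := ∑ i ∈ S₁, ∑ j ∈ S₁, π₁ i * (π₁ j / a) * A i j with hTdef
    have hswap : T = ∑ i ∈ S₁, ∑ j ∈ S₁, π₁ j * (π₁ i / a) * A j i :=
      Finset.sum_comm
    have e : ∑ i ∈ S₁, ∑ j ∈ S₁,
        (π₁ i * (π₁ j / a) * A i j + π₁ j * (π₁ i / a) * A j i) = 2 * c * a := by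
      have hin : ∀ i ∈ S₁, ∑ j ∈ S₁,
          (π₁ i * (π₁ j / a) * A i j + π₁ j * (π₁ i / a) * A j i) = π₁ i * (2 * c) := by
        intro i _
        calc ∑ j ∈ S₁, (π₁ i * (π₁ j / a) * A i j + π₁ j * (π₁ i / a) * A j i)
            = ∑ j ∈ S₁, (π₁ i * (2 * c) / a) * π₁ j := by
              refine Finset.sum_congr rfl fun j _ => ?_
              have h := hAanti i j
              have h2 : π₁ i * (π₁ j / a) * A i j + π₁ j * (π₁ i / a) * A j i
                  = (π₁ i * π₁ j / a) * (A i j + A j i) := by ring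
              rw [h2, h]; ring
          _ = (π₁ i * (2 * c) / a) * a := by rw [← Finset.mul_sum, ← hadef]
          _ = π₁ i * (2 * c) := div_mul_cancel₀ _ (ne_of_gt ha)
      rw [Finset.sum_congr rfl hin, ← Finset.sum_mul, ← hadef]
      ring
    have hTT : T + T = 2 * c * a := by
      nth_rewrite 2 [hswap]
      rw [hTdef, ← Finset.sum_add_distrib]
      rw [Finset.sum_congr rfl fun i _ => (Finset.sum_add_distrib).symm]
      exact e
    have hT : T = c * a := by linarith
    -- off-diagonal block
    have hoff : ∑ i ∈ S₁ᶜ, ∑ j ∈ S₁, π₁ i * (π₁ j / a) * A i j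
        < ∑ i ∈ S₁ᶜ, π₁ i * c := by
      refine Finset.sum_lt_sum (fun i hi => ?_) ⟨i₀, Finset.mem_compl.2 hnot, ?_⟩
      · have hi' : i ∉ S₁ := Finset.mem_compl.1 hi
        calc ∑ j ∈ S₁, π₁ i * (π₁ j / a) * A i j
            ≤ ∑ j ∈ S₁, π₁ i * (π₁ j / a) * c := by
              refine Finset.sum_le_sum fun j hj => ?_
              have hnn : 0 ≤ π₁ i * (π₁ j / a) := by
                have := hp1.1 i; have := hp1.1 j; positivity
              exact mul_le_mul_of_nonneg_left (hAlt i hi' j hj).le hnn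
          _ = π₁ i * c := by
              have : ∀ j ∈ S₁, π₁ i * (π₁ j / a) * c = (π₁ i * c / a) * π₁ j := by
                intro j _; ring
              rw [Finset.sum_congr rfl this, ← Finset.mul_sum, ← hadef]
              exact div_mul_cancel₀ _ (ne_of_gt ha)
      · calc ∑ j ∈ S₁, π₁ i₀ * (π₁ j / a) * A i₀ j
            < ∑ j ∈ S₁, π₁ i₀ * (π₁ j / a) * c := by
              refine Finset.sum_lt_sum (fun j hj => ?_) ⟨j₁, hj₁S, ?_⟩
              · have hnn : 0 ≤ π₁ i₀ * (π₁ j / a) := by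
                  have := hp1.1 j; positivity
                exact mul_le_mul_of_nonneg_left (hAlt i₀ hnot j hj).le hnn
              · have hpp : 0 < π₁ i₀ * (π₁ j₁ / a) := by positivity
                exact mul_lt_mul_of_pos_left (hAlt i₀ hnot j₁ hj₁S) hpp
          _ = π₁ i₀ * c := by
              have : ∀ j ∈ S₁, π₁ i₀ * (π₁ j / a) * c = (π₁ i₀ * c / a) * π₁ j := by
                intro j _; ring
              rw [Finset.sum_congr rfl this, ← Finset.mul_sum, ← hadef]
              exact div_mul_cancel₀ _ (ne_of_gt ha)
    -- combine
    have hsplit : payoff A π₁ π' = T + ∑ i ∈ S₁ᶜ, ∑ j ∈ S₁, π₁ i * (π₁ j / a) * A i j := by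
      rw [hcomp, hTdef, Finset.sum_add_sum_compl]
    have hb : ∑ i ∈ S₁ᶜ, π₁ i = 1 - a := by
      have := Finset.sum_add_sum_compl S₁ π₁
      rw [hp1.2] at this
      linarith
    have hcb : ∑ i ∈ S₁ᶜ, π₁ i * c = (1 - a) * c := by rw [hsumc, hb]
    have hfin : payoff A π₁ π' < c := by
      rw [hsplit, hT]
      have := hge π' hπ'
      nlinarith [hoff]
    have := hge π' hπ'
    linarith
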